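/- Let X₁ and X₂ be real Hausdorff locally convex topological vector spaces, let Ω₁ ⊆ X₁ and Ω₂ ⊆ X₂ be nonempty compact convex sets, and let f : X₁ × X₂ → ℝ be a continuous function such that f(·, y) is concave on X₁ for every fixed y ∈ Ω₂ and f(x, ·) is convex on X₂ for every fixed x ∈ Ω₁. Then the minimax equality max over x ∈ Ω₁ of (min over y ∈ Ω₂ of f(x, y)) = min over y ∈ Ω₂ of (max over x ∈ Ω₁ of f(x, y)) holds, where all the indicated maxima and minima are attained. -/

import Mathlib

open Set

section Kneser

variable {X₁ X₂ : Type*}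
    [AddCommGroup X₁] [Module ℝ X₁] [TopologicalSpace X₁] [IsTopologicalAddGroup X₁]
    [ContinuousSMul ℝ X₁]
    [AddCommGroup X₂] [Module ℝ X₂] [TopologicalSpace X₂] [IsTopologicalAddGroup X₂]
    [ContinuousSMul ℝ X₂]

lemma kneser_two (f : X₁ → X₂ → ℝ) (hf : Continuous fun p : X₁ × X₂ => f p.1 p.2)
    (K : Set X₁) (hK : IsCompact K) (hKcv : Convex ℝ K)
    (y₁ y₂ : X₂)
    (hconc : ∀ z ∈ segment ℝ y₁ y₂, ConcaveOn ℝ Set.univ (fun x => f x z))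
    (hconv : ∀ x ∈ K, ConvexOn ℝ Set.univ (f x))
    (β α : ℝ) (hβα : β < α)
    (hyp : ∀ x ∈ K, f x y₁ ≤ β ∨ f x y₂ ≤ β) :
    ∃ z ∈ segment ℝ y₁ y₂, ∀ x ∈ K, f x z ≤ α := by
  by_contra hcon
  push_neg at hcon
  set α' : ℝ := (β + α) / 2 with hα'
  have hβα' : β < α' := by simp [hα']; linarith
  have hα'α : α' < α := by simp [hα']; linarith
  set z : ℝ → X₂ := fun t => (1 - t) • y₁ + t • y₂ with hz
  have hzc : Continuous z := by
    apply Continuous.add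
    · exact (continuous_const.sub continuous_id).smul continuous_const
    · exact continuous_id.smul continuous_const
  have hzseg : ∀ t ∈ Icc (0:ℝ) 1, z t ∈ segment ℝ y₁ y₂ := by
    intro t ht
    rw [segment_eq_image]
    exact ⟨t, ht, rfl⟩
  have hz0 : z 0 = y₁ := by simp [hz]
  have hz1 : z 1 = y₂ := by simp [hz]
  -- the two closed pieces
  set T : X₂ → Set ℝ := fun w =>
    {t : ℝ | t ∈ Icc (0:ℝ) 1 ∧ ∃ x ∈ K, α' ≤ f x (z t) ∧ α' ≤ f x w} with hT
  have hTclosed : ∀ w : X₂, IsClosed (T w) := by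
    intro w
    have hC : IsCompact ((Icc (0:ℝ) 1 ×ˢ K) ∩
        {p : ℝ × X₁ | α' ≤ f p.2 (z p.1) ∧ α' ≤ f p.2 w}) := by
      apply (isCompact_Icc.prod hK).inter_right
      apply IsClosed.inter
      · exact isClosed_le continuous_const
          (hf.comp ((continuous_snd).prodMk (hzc.comp continuous_fst)))
      · exact isClosed_le continuous_const
          (hf.comp ((continuous_snd).prodMk continuous_const))
    have himg : T w = Prod.fst '' ((Icc (0:ℝ) 1 ×ˢ K) ∩
        {p : ℝ × X₁ | α' ≤ f p.2 (z p.1) ∧ α' ≤ f p.2 w}) := by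
      ext t
      constructor
      · rintro ⟨ht, x, hx, h1, h2⟩
        exact ⟨(t, x), ⟨⟨ht, hx⟩, h1, h2⟩, rfl⟩
      · rintro ⟨⟨t', x⟩, ⟨⟨ht, hx⟩, h1, h2⟩, rfl⟩
        exact ⟨ht, x, hx, h1, h2⟩
    rw [himg]
    exact (hC.image continuous_fst).isClosed
  -- covering
  have hcover : Icc (0:ℝ) 1 ⊆ T y₁ ∪ T y₂ := by
    intro t ht
    obtain ⟨x, hx, hfx⟩ := hcon (z t) (hzseg t ht)
    have hcv := (hconv x hx).2 (mem_univ y₁) (mem_univ y₂)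
      (by linarith [ht.2] : (0:ℝ) ≤ 1 - t) ht.1 (by ring)
    simp only [smul_eq_mul] at hcv
    have hzle : f x (z t) ≤ (1 - t) * f x y₁ + t * f x y₂ := hcv
    have : α' ≤ f x y₁ ∨ α' ≤ f x y₂ := by
      by_contra hboth
      push_neg at hboth
      have h1 : (1 - t) * f x y₁ ≤ (1 - t) * α' :=
        mul_le_mul_of_nonneg_left hboth.1.le (by linarith [ht.2])
      have h2 : t * f x y₂ ≤ t * α' :=
        mul_le_mul_of_nonneg_left hboth.2.le ht.1
      nlinarith
    rcases this with h | h
    · exact Or.inl ⟨ht, x, hx, by linarith, h⟩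
    · exact Or.inr ⟨ht, x, hx, by linarith, h⟩
  have h0 : 0 ∈ T y₁ := by
    obtain ⟨x, hx, hfx⟩ := hcon y₁ (left_mem_segment ℝ y₁ y₂)
    exact ⟨⟨le_refl 0, zero_le_one⟩, x, hx, by rw [hz0]; linarith, by linarith⟩
  have h1 : 1 ∈ T y₂ := by
    obtain ⟨x, hx, hfx⟩ := hcon y₂ (right_mem_segment ℝ y₁ y₂)
    exact ⟨⟨zero_le_one, le_refl 1⟩, x, hx, by rw [hz1]; linarith, by linarith⟩
  -- disjointness via IVT
  have hdisj : ∀ t, t ∈ T y₁ → t ∈ T y₂ → False := by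
    rintro t ⟨ht, x₁, hx₁, hzx₁, hy₁x₁⟩ ⟨-, x₂, hx₂, hzx₂, hy₂x₂⟩
    have hb₁ : f x₁ y₂ ≤ β := (hyp x₁ hx₁).resolve_left (by linarith)
    have hb₂ : f x₂ y₁ ≤ β := (hyp x₂ hx₂).resolve_right (by linarith)
    set w : ℝ → X₁ := fun s => (1 - s) • x₁ + s • x₂ with hw
    have hwc : Continuous w := by
      apply Continuous.add
      · exact (continuous_const.sub continuous_id).smul continuous_const
      · exact continuous_id.smul continuous_const
    have hw0 : w 0 = x₁ := by simp [hw]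
    have hw1 : w 1 = x₂ := by simp [hw]
    set g : ℝ → ℝ := fun s => f (w s) y₁ - f (w s) y₂ with hg
    have hgc : Continuous g := by
      apply Continuous.sub
      · exact hf.comp (hwc.prodMk continuous_const)
      · exact hf.comp (hwc.prodMk continuous_const)
    have hg0 : 0 < g 0 := by simp [hg, hw0]; nlinarith
    have hg1 : g 1 < 0 := by simp [hg, hw1]; nlinarith
    have : (0:ℝ) ∈ Icc (g 1) (g 0) := ⟨hg1.le, hg0.le⟩
    obtain ⟨s, hs, hgs⟩ := intermediate_value_Icc' zero_le_one hgc.continuousOn this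
    have hxs : w s ∈ K := hKcv hx₁ hx₂ (by linarith [hs.2]) hs.1 (by ring)
    have heq : f (w s) y₁ = f (w s) y₂ := by
      have : f (w s) y₁ - f (w s) y₂ = 0 := hgs
      linarith
    -- concavity at z t
    have hcc := (hconc (z t) (hzseg t ht)).2 (mem_univ x₁) (mem_univ x₂)
      (by linarith [hs.2] : (0:ℝ) ≤ 1 - s) hs.1 (by ring)
    simp only [smul_eq_mul] at hcc
    have hα'zs : α' ≤ f (w s) (z t) := by
      have h1 : (1 - s) * α' ≤ (1 - s) * f x₁ (z t) :=
        mul_le_mul_of_nonneg_left hzx₁ (by linarith [hs.2])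
      have h2 : s * α' ≤ s * f x₂ (z t) :=
        mul_le_mul_of_nonneg_left hzx₂ hs.1
      nlinarith
    have hcvs := (hconv (w s) hxs).2 (mem_univ y₁) (mem_univ y₂)
      (by linarith [ht.2] : (0:ℝ) ≤ 1 - t) ht.1 (by ring)
    simp only [smul_eq_mul] at hcvs
    have hcvs' : f (w s) (z t) ≤ (1 - t) * f (w s) y₁ + t * f (w s) y₂ := hcvs
    rw [heq] at hcvs'
    have hring : (1 - t) * f (w s) y₂ + t * f (w s) y₂ = f (w s) y₂ := by ring
    have : α' ≤ f (w s) y₁ := by rw [heq]; linarith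
    rcases hyp (w s) hxs with h | h
    · linarith
    · rw [heq] at this; linarith
  -- connectedness contradiction
  obtain ⟨t, -, ht₁, ht₂⟩ := isPreconnected_closed_iff.mp isPreconnected_Icc
    (T y₁) (T y₂) (hTclosed y₁) (hTclosed y₂) hcover
    ⟨0, ⟨le_refl 0, zero_le_one⟩, h0⟩ ⟨1, ⟨zero_le_one, le_refl 1⟩, h1⟩
  exact hdisj t ht₁ ht₂

end Kneser

section KneserList

variable {X₁ X₂ : Type*}
    [AddCommGroup X₁] [Module ℝ X₁] [TopologicalSpace X₁] [IsTopologicalAddGroup X₁]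
    [ContinuousSMul ℝ X₁]
    [AddCommGroup X₂] [Module ℝ X₂] [TopologicalSpace X₂] [IsTopologicalAddGroup X₂]
    [ContinuousSMul ℝ X₂]

lemma kneser_list (Ω₂ : Set X₂) (hcv₂ : Convex ℝ Ω₂)
    (f : X₁ → X₂ → ℝ) (hf : Continuous fun p : X₁ × X₂ => f p.1 p.2)
    (hconc : ∀ y ∈ Ω₂, ConcaveOn ℝ Set.univ (fun x => f x y))
    (ys : List X₂) :
    ys ≠ [] → (∀ y ∈ ys, y ∈ Ω₂) →
    ∀ K : Set X₁, IsCompact K → Convex ℝ K → (∀ x ∈ K, ConvexOn ℝ Set.univ (f x)) →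
    ∀ β α : ℝ, β < α → (∀ x ∈ K, ∃ y ∈ ys, f x y ≤ β) →
    ∃ y ∈ Ω₂, ∀ x ∈ K, f x y ≤ α := by
  induction ys with
  | nil => intro h; exact absurd rfl h
  | cons y₀ ys ih =>
    intro _ hmem K hK hKcv hconv β α hβα hyp
    have hy₀ : y₀ ∈ Ω₂ := hmem y₀ (List.mem_cons_self)
    rcases eq_or_ne ys [] with rfl | hne
    · refine ⟨y₀, hy₀, fun x hx => ?_⟩
      obtain ⟨y, hy, hle⟩ := hyp x hx
      simp only [List.mem_singleton] at hy
      subst hy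
      linarith
    · set α₂ : ℝ := (β + α) / 2 with hα₂
      have hβα₂ : β < α₂ := by simp [hα₂]; linarith
      have hα₂α : α₂ < α := by simp [hα₂]; linarith
      set A : Set X₁ := {x ∈ K | α₂ ≤ f x y₀} with hA
      have hAK : A ⊆ K := fun x hx => hx.1
      have hAcp : IsCompact A := by
        have : A = K ∩ {x | α₂ ≤ f x y₀} := rfl
        rw [this]
        exact hK.inter_right (isClosed_le continuous_const
          (hf.comp (continuous_id.prodMk continuous_const)))
      have hAcv : Convex ℝ A := by
        have h1 : Convex ℝ {x ∈ (univ : Set X₁) | α₂ ≤ f x y₀} :=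
          (hconc y₀ hy₀).convex_ge α₂
        have h2 : A = K ∩ {x ∈ (univ : Set X₁) | α₂ ≤ f x y₀} := by
          ext x; simp [hA]
        rw [h2]
        exact hKcv.inter h1
      have hypA : ∀ x ∈ A, ∃ y ∈ ys, f x y ≤ β := by
        rintro x ⟨hxK, hxA⟩
        obtain ⟨y, hy, hle⟩ := hyp x hxK
        rcases List.mem_cons.mp hy with rfl | hy'
        · linarith
        · exact ⟨y, hy', hle⟩
      obtain ⟨y', hy', hy'le⟩ := ih hne (fun y hy => hmem y (List.mem_cons_of_mem _ hy))
        A hAcp hAcv (fun x hx => hconv x (hAK hx)) β α₂ hβα₂ hypA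
      have hconc' : ∀ z ∈ segment ℝ y' y₀, ConcaveOn ℝ Set.univ (fun x => f x z) :=
        fun z hz => hconc z (hcv₂.segment_subset hy' hy₀ hz)
      have hyp2 : ∀ x ∈ K, f x y' ≤ α₂ ∨ f x y₀ ≤ α₂ := by
        intro x hx
        by_cases hxA : α₂ ≤ f x y₀
        · exact Or.inl (hy'le x ⟨hx, hxA⟩)
        · exact Or.inr (le_of_not_ge hxA)
      obtain ⟨z, hz, hzle⟩ := kneser_two f hf K hK hKcv y' y₀ hconc' hconv α₂ α hα₂α hyp2
      exact ⟨z, hcv₂.segment_subset hy' hy₀ hz, hzle⟩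

end KneserList

lemma exists_uniform_gt {ι X : Type*} [TopologicalSpace X]
    (s : Finset ι) (hs : s.Nonempty) (g : ι → X → ℝ) (hg : ∀ i, Continuous (g i))
    (K : Set X) (hK : IsCompact K) (hKne : K.Nonempty) (c : ℝ)
    (h : ∀ y ∈ K, ∃ i ∈ s, c < g i y) :
    ∃ γ, c < γ ∧ ∀ y ∈ K, ∃ i ∈ s, γ ≤ g i y := by
  have hψ : Continuous fun y => s.sup' hs (fun i => g i y) := by
    clear h
    induction hs using Finset.Nonempty.cons_induction with
    | singleton a => simpa using hg a
    | cons a t ha hne ih =>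
      simp only [Finset.sup'_cons, hne]
      exact (hg a).max ih
  obtain ⟨y₀, hy₀, hmin⟩ := hK.exists_isMinOn hKne hψ.continuousOn
  refine ⟨s.sup' hs (fun i => g i y₀), ?_, ?_⟩
  · obtain ⟨i, hi, hlt⟩ := h y₀ hy₀
    exact lt_of_lt_of_le hlt (Finset.le_sup' (fun i => g i y₀) hi)
  · intro y hy
    obtain ⟨i, hi, heq⟩ := s.exists_mem_eq_sup' hs (fun i => g i y)
    exact ⟨i, hi, by rw [← heq]; exact hmin hy⟩


/-- Minimax equality for continuous concave-convex functions on nonempty compact convex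
subsets of locally convex topological vector spaces:
`max_{x ∈ Ω₁} min_{y ∈ Ω₂} f(x,y) = min_{y ∈ Ω₂} max_{x ∈ Ω₁} f(x,y)`, with all the
indicated maxima and minima attained. -/
theorem minimax_concave_convex_lctv
    {X₁ X₂ : Type*}
    [AddCommGroup X₁] [Module ℝ X₁] [TopologicalSpace X₁] [IsTopologicalAddGroup X₁]
    [ContinuousSMul ℝ X₁] [LocallyConvexSpace ℝ X₁] [T2Space X₁]
    [AddCommGroup X₂] [Module ℝ X₂] [TopologicalSpace X₂] [IsTopologicalAddGroup X₂]
    [ContinuousSMul ℝ X₂] [LocallyConvexSpace ℝ X₂] [T2Space X₂]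
    (Ω₁ : Set X₁) (Ω₂ : Set X₂)
    (hne₁ : Ω₁.Nonempty) (hcp₁ : IsCompact Ω₁) (hcv₁ : Convex ℝ Ω₁)
    (hne₂ : Ω₂.Nonempty) (hcp₂ : IsCompact Ω₂) (hcv₂ : Convex ℝ Ω₂)
    (f : X₁ × X₂ → ℝ) (hf : Continuous f)
    (hconc : ∀ y ∈ Ω₂, ConcaveOn ℝ Set.univ (fun x => f (x, y)))
    (hconv : ∀ x ∈ Ω₁, ConvexOn ℝ Set.univ (fun y => f (x, y))) :
    -- the inner minima and maxima are attained
    (∀ x ∈ Ω₁, ∃ y ∈ Ω₂, IsLeast ((fun y => f (x, y)) '' Ω₂) (f (x, y))) ∧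
    (∀ y ∈ Ω₂, ∃ x ∈ Ω₁, IsGreatest ((fun x => f (x, y)) '' Ω₁) (f (x, y))) ∧
    -- the outer max and min are attained and equal
    ∃ c : ℝ,
      IsGreatest ((fun x => sInf ((fun y => f (x, y)) '' Ω₂)) '' Ω₁) c ∧
      IsLeast ((fun y => sSup ((fun x => f (x, y)) '' Ω₁)) '' Ω₂) c := by
  have hfc : ∀ x : X₁, Continuous fun y => f (x, y) :=
    fun x => hf.comp (continuous_const.prodMk continuous_id)
  have hfc' : ∀ y : X₂, Continuous fun x => f (x, y) :=
    fun y => hf.comp (continuous_id.prodMk continuous_const)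
  -- images
  have hIcp : ∀ x : X₁, IsCompact ((fun y => f (x, y)) '' Ω₂) :=
    fun x => hcp₂.image (hfc x)
  have hIne : ∀ x : X₁, ((fun y => f (x, y)) '' Ω₂).Nonempty :=
    fun x => hne₂.image _
  have hJcp : ∀ y : X₂, IsCompact ((fun x => f (x, y)) '' Ω₁) :=
    fun y => hcp₁.image (hfc' y)
  have hJne : ∀ y : X₂, ((fun x => f (x, y)) '' Ω₁).Nonempty :=
    fun y => hne₁.image _
  set g : X₁ → ℝ := fun x => sInf ((fun y => f (x, y)) '' Ω₂) with hgdef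
  set h : X₂ → ℝ := fun y => sSup ((fun x => f (x, y)) '' Ω₁) with hhdef
  have hgle : ∀ (x : X₁), ∀ y ∈ Ω₂, g x ≤ f (x, y) :=
    fun x y hy => csInf_le (hIcp x).bddBelow (mem_image_of_mem _ hy)
  have hhle : ∀ (y : X₂), ∀ x ∈ Ω₁, f (x, y) ≤ h y :=
    fun y x hx => le_csSup (hJcp y).bddAbove (mem_image_of_mem _ hx)
  have hgh : ∀ x ∈ Ω₁, ∀ y ∈ Ω₂, g x ≤ h y :=
    fun x hx y hy => le_trans (hgle x y hy) (hhle y x hx)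
  obtain ⟨x₀, hx₀⟩ := id hne₁
  obtain ⟨y₀, hy₀⟩ := id hne₂
  have hgbdd : BddAbove (g '' Ω₁) :=
    ⟨h y₀, by rintro _ ⟨x, hx, rfl⟩; exact hgh x hx y₀ hy₀⟩
  have hhbdd : BddBelow (h '' Ω₂) :=
    ⟨g x₀, by rintro _ ⟨y, hy, rfl⟩; exact hgh x₀ hx₀ y hy⟩
  set c₁ : ℝ := sSup (g '' Ω₁) with hc₁def
  set c₂ : ℝ := sInf (h '' Ω₂) with hc₂def
  have hgc₁ : ∀ x ∈ Ω₁, g x ≤ c₁ :=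
    fun x hx => le_csSup hgbdd (mem_image_of_mem _ hx)
  have hc₂h : ∀ y ∈ Ω₂, c₂ ≤ h y :=
    fun y hy => csInf_le hhbdd (mem_image_of_mem _ hy)
  have hc₁c₂ : c₁ ≤ c₂ := by
    apply csSup_le (hne₁.image _)
    rintro _ ⟨x, hx, rfl⟩
    apply le_csInf (hne₂.image _)
    rintro _ ⟨y, hy, rfl⟩
    exact hgh x hx y hy
  -- existence of y* with f(x,y*) ≤ c₁ for all x ∈ Ω₁
  have hystar : ∃ y ∈ Ω₂, ∀ x ∈ Ω₁, f (x, y) ≤ c₁ := by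
    by_contra hcon
    have hempty : Ω₂ ∩ ⋂ x : Ω₁, {y : X₂ | f (↑x, y) ≤ c₁} = ∅ := by
      rw [Set.eq_empty_iff_forall_notMem]
      rintro y ⟨hy, hy2⟩
      simp only [Set.mem_iInter, Set.mem_setOf_eq] at hy2
      exact hcon ⟨y, hy, fun x hx => hy2 ⟨x, hx⟩⟩
    obtain ⟨S, hS⟩ := hcp₂.elim_finite_subfamily_closed _
      (fun x : Ω₁ => isClosed_le (hfc ↑x) continuous_const) hempty
    have hSne : S.Nonempty := by
      by_contra hSe
      rw [Finset.not_nonempty_iff_eq_empty] at hSe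
      subst hSe
      simp at hS
      exact absurd hS (Set.nonempty_iff_ne_empty.mp hne₂)
    have hstrict : ∀ y ∈ Ω₂, ∃ x ∈ S, c₁ < f (↑x, y) := by
      intro y hy
      by_contra hcon2
      push_neg at hcon2
      have : y ∈ Ω₂ ∩ ⋂ x ∈ S, {y : X₂ | f (↑x, y) ≤ c₁} :=
        ⟨hy, by simp only [Set.mem_iInter, Set.mem_setOf_eq]; exact fun x hx => hcon2 x hx⟩
      rw [hS] at this
      exact this
    obtain ⟨γ, hγ, hγall⟩ := exists_uniform_gt S hSne (fun i y => f (↑i, y))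
      (fun i => hfc ↑i) Ω₂ hcp₂ hne₂ c₁ hstrict
    -- apply Kneser with roles swapped
    set F : X₂ → X₁ → ℝ := fun y x => -f (x, y) with hFdef
    have hFc : Continuous fun p : X₂ × X₁ => F p.1 p.2 :=
      (hf.comp (continuous_snd.prodMk continuous_fst)).neg
    have hFconc : ∀ x ∈ Ω₁, ConcaveOn ℝ Set.univ (fun y => F y x) :=
      fun x hx => (hconv x hx).neg
    have hFconv : ∀ y ∈ Ω₂, ConvexOn ℝ Set.univ (F y) :=
      fun y hy => (hconc y hy).neg
    set ys : List X₁ := S.toList.map Subtype.val with hysdef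
    have hysne : ys ≠ [] := by
      intro hcon
      rcases List.map_eq_nil_iff.mp hcon with h'
      exact Finset.nonempty_iff_ne_empty.mp hSne (Finset.toList_eq_nil.mp h')
    have hysmem : ∀ x ∈ ys, x ∈ Ω₁ := by
      intro x hx
      obtain ⟨i, _, rfl⟩ := List.mem_map.mp hx
      exact i.2
    have hyp : ∀ y ∈ Ω₂, ∃ x ∈ ys, F y x ≤ -γ := by
      intro y hy
      obtain ⟨i, hi, hge⟩ := hγall y hy
      exact ⟨↑i, List.mem_map.mpr ⟨i, (Finset.mem_toList).mpr hi, rfl⟩,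
        by simp only [hFdef]; linarith⟩
    obtain ⟨x, hx, hxall⟩ := kneser_list Ω₁ hcv₁ F hFc hFconc ys hysne hysmem
      Ω₂ hcp₂ hcv₂ hFconv (-γ) (-(c₁ + γ) / 2) (by linarith) hyp
    have : (c₁ + γ) / 2 ≤ g x := by
      apply le_csInf (hne₂.image _)
      rintro _ ⟨y, hy, rfl⟩
      have := hxall y hy
      simp only [hFdef] at this
      linarith
    have := hgc₁ x hx
    linarith
  -- existence of x* with c₂ ≤ f(x*,y) for all y ∈ Ω₂
  have hxstar : ∃ x ∈ Ω₁, ∀ y ∈ Ω₂, c₂ ≤ f (x, y) := by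
    by_contra hcon
    have hempty : Ω₁ ∩ ⋂ y : Ω₂, {x : X₁ | c₂ ≤ f (x, ↑y)} = ∅ := by
      rw [Set.eq_empty_iff_forall_notMem]
      rintro x ⟨hx, hx2⟩
      simp only [Set.mem_iInter, Set.mem_setOf_eq] at hx2
      exact hcon ⟨x, hx, fun y hy => hx2 ⟨y, hy⟩⟩
    obtain ⟨S, hS⟩ := hcp₁.elim_finite_subfamily_closed _
      (fun y : Ω₂ => isClosed_le continuous_const (hfc' ↑y)) hempty
    have hSne : S.Nonempty := by
      by_contra hSe
      rw [Finset.not_nonempty_iff_eq_empty] at hSe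
      subst hSe
      simp at hS
      exact absurd hS (Set.nonempty_iff_ne_empty.mp hne₁)
    have hstrict : ∀ x ∈ Ω₁, ∃ y ∈ S, -c₂ < -f (x, ↑y) := by
      intro x hx
      by_contra hcon2
      push_neg at hcon2
      have : x ∈ Ω₁ ∩ ⋂ y ∈ S, {x : X₁ | c₂ ≤ f (x, ↑y)} :=
        ⟨hx, by simp only [Set.mem_iInter, Set.mem_setOf_eq]
                intro y hy
                have := hcon2 y hy
                linarith⟩
      rw [hS] at this
      exact this
    obtain ⟨γ, hγ, hγall⟩ := exists_uniform_gt S hSne (fun i x => -f (x, ↑i))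
      (fun i => (hfc' ↑i).neg) Ω₁ hcp₁ hne₁ (-c₂) hstrict
    set ys : List X₂ := S.toList.map Subtype.val with hysdef
    have hysne : ys ≠ [] := by
      intro hcon
      rcases List.map_eq_nil_iff.mp hcon with h'
      exact Finset.nonempty_iff_ne_empty.mp hSne (Finset.toList_eq_nil.mp h')
    have hysmem : ∀ y ∈ ys, y ∈ Ω₂ := by
      intro y hy
      obtain ⟨i, _, rfl⟩ := List.mem_map.mp hy
      exact i.2
    have hyp : ∀ x ∈ Ω₁, ∃ y ∈ ys, f (x, y) ≤ -γ := by
      intro x hx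
      obtain ⟨i, hi, hge⟩ := hγall x hx
      exact ⟨↑i, List.mem_map.mpr ⟨i, (Finset.mem_toList).mpr hi, rfl⟩, by linarith⟩
    obtain ⟨y, hy, hyall⟩ := kneser_list Ω₂ hcv₂ (fun x y => f (x, y)) hf
      hconc ys hysne hysmem Ω₁ hcp₁ hcv₁ hconv (-γ) ((-γ + c₂) / 2) (by linarith) hyp
    have : h y ≤ (-γ + c₂) / 2 := by
      apply csSup_le (hne₁.image _)
      rintro _ ⟨x, hx, rfl⟩
      exact hyall x hx
    have := hc₂h y hy
    linarith
  obtain ⟨ystar, hystarΩ, hystarle⟩ := hystar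
  obtain ⟨xstar, hxstarΩ, hxstarge⟩ := hxstar
  have hc₂c₁ : c₂ ≤ c₁ := by
    have : h ystar ≤ c₁ := csSup_le (hne₁.image _) (by rintro _ ⟨x, hx, rfl⟩; exact hystarle x hx)
    linarith [hc₂h ystar hystarΩ]
  have hceq : c₁ = c₂ := le_antisymm hc₁c₂ hc₂c₁
  refine ⟨?_, ?_, c₁, ?_, ?_⟩
  · intro x hx
    obtain ⟨y, hy, hmin⟩ := hcp₂.exists_isMinOn hne₂ (hfc x).continuousOn
    exact ⟨y, hy, mem_image_of_mem _ hy,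
      by rintro _ ⟨y', hy', rfl⟩; exact hmin hy'⟩
  · intro y hy
    obtain ⟨x, hx, hmax⟩ := hcp₁.exists_isMaxOn hne₁ (hfc' y).continuousOn
    exact ⟨x, hx, mem_image_of_mem _ hx,
      by rintro _ ⟨x', hx', rfl⟩; exact hmax hx'⟩
  · constructor
    · refine ⟨xstar, hxstarΩ, ?_⟩
      have h1 : c₂ ≤ g xstar := by
        apply le_csInf (hne₂.image _)
        rintro _ ⟨y, hy, rfl⟩
        exact hxstarge y hy
      have h2 : g xstar ≤ c₁ := hgc₁ xstar hxstarΩ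
      show g xstar = c₁
      linarith [hceq]
    · rintro _ ⟨x, hx, rfl⟩
      exact hgc₁ x hx
  · constructor
    · refine ⟨ystar, hystarΩ, ?_⟩
      have h1 : h ystar ≤ c₁ :=
        csSup_le (hne₁.image _) (by rintro _ ⟨x, hx, rfl⟩; exact hystarle x hx)
      have h2 : c₂ ≤ h ystar := hc₂h ystar hystarΩ
      show h ystar = c₁
      linarith [hceq]
    · rintro _ ⟨y, hy, rfl⟩
      have := hc₂h y hy
      show c₁ ≤ h y
      linarith [hceq]
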